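/- Let N ≥ 0 be an integer and let ℓ_0, …, ℓ_N be positive integers. Define integers X_0, …, X_{N+1} by the backward recursion X_{N+1} = 0, X_N = 1, X_{j−1} = X_{j+1} + ℓ_j X_j for 1 ≤ j ≤ N, and define Y_0, …, Y_{N+1} by the same backward recursion for the reversed sequence: Y_{N+1} = 0, Y_N = 1, Y_{j−1} = Y_{j+1} + ℓ_{N−j} Y_j for 1 ≤ j ≤ N. Then Σ_{j=0}^N (−1)^j ℓ_j X_j Y_{N−j} = ℓ_0 X_0 + X_1 if N is even, and Σ_{j=0}^N (−1)^j ℓ_j X_j Y_{N−j} = 0 if N is odd. -/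

import Mathlib

/-- **Proposition 2.8 (prop:mirror).** Let `X` be the normalized weights of
`[ℓ_0; …, ℓ_N]` (backward recursion `X_{N+1} = 0`, `X_N = 1`,
`X_{j−1} = X_{j+1} + ℓ_j X_j`), and let `Y` be the normalized weights of the
mirror `[ℓ_N; …, ℓ_0]`.  Then `Σ_{j=0}^N (−1)^j ℓ_j X_j Y_{N−j}` equals
`ℓ_0 X_0 + X_1` (which is the numerator `p_N`) if `N` is even, and `0` if `N`
is odd. -/
theorem stmt_4 (N : ℕ) (ℓ : ℕ → ℕ) (hℓ : ∀ j ≤ N, 0 < ℓ j)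
    (X Y : ℕ → ℕ)
    (hXtop : X (N + 1) = 0) (hXN : X N = 1)
    (hXrec : ∀ j, 1 ≤ j → j ≤ N → X (j - 1) = X (j + 1) + ℓ j * X j)
    (hYtop : Y (N + 1) = 0) (hYN : Y N = 1)
    (hYrec : ∀ j, 1 ≤ j → j ≤ N → Y (j - 1) = Y (j + 1) + ℓ (N - j) * Y j) :
    (Even N →
      ∑ j ∈ Finset.range (N + 1), (-1 : ℤ) ^ j * (ℓ j : ℤ) * (X j : ℤ) * (Y (N - j) : ℤ)
        = (ℓ 0 : ℤ) * (X 0 : ℤ) + (X 1 : ℤ)) ∧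
    (Odd N →
      ∑ j ∈ Finset.range (N + 1), (-1 : ℤ) ^ j * (ℓ j : ℤ) * (X j : ℤ) * (Y (N - j) : ℤ)
        = 0) := by
  have key : ∀ j, j ≤ N →
      ℓ j * X j * Y (N - j) + X (j+1) * Y (N - j) + X j * Y (N - j + 1)
        = ℓ 0 * X 0 + X 1 := by
    intro j
    induction j with
    | zero =>
        intro _
        simp only [Nat.sub_zero, hYN, hYtop, mul_one, mul_zero, add_zero]
    | succ j ih =>
        intro hj
        have ihj := ih (by omega)
        have hX : X j = X (j+2) + ℓ (j+1) * X (j+1) := by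
          have := hXrec (j+1) (by omega) hj
          simpa using this
        have hY : Y (N - j - 1) = Y (N - j + 1) + ℓ j * Y (N - j) := by
          have h := hYrec (N - j) (by omega) (by omega)
          have hnn : N - (N - j) = j := by omega
          rwa [hnn] at h
        have e1 : N - (j+1) = N - j - 1 := by omega
        have e2' : N - j - 1 + 1 = N - j := by omega
        rw [e1, e2', hY]
        rw [hX] at ihj
        zify at ihj ⊢
        linear_combination ihj
  set p : ℤ := (ℓ 0 : ℤ) * (X 0 : ℤ) + (X 1 : ℤ) with hp
  set f : ℕ → ℤ := fun i => (-1 : ℤ) ^ i * ((X i : ℤ) * (Y (N + 1 - i) : ℤ)) with hf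
  have hterm : ∀ j ∈ Finset.range (N + 1),
      (-1 : ℤ) ^ j * (ℓ j : ℤ) * (X j : ℤ) * (Y (N - j) : ℤ)
        = (-1 : ℤ) ^ j * p - (f j - f (j + 1)) := by
    intro j hj
    rw [Finset.mem_range] at hj
    have hjN : j ≤ N := by omega
    have k := key j hjN
    have kz : ((ℓ j : ℤ)) * X j * Y (N - j) + X (j+1) * Y (N - j) + X j * Y (N - j + 1)
        = p := by rw [hp]; exact_mod_cast congrArg (Nat.cast (R := ℤ)) k
    have e1 : N + 1 - j = N - j + 1 := by omega
    have e2 : N + 1 - (j + 1) = N - j := by omega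
    simp only [hf, e1, e2, pow_succ]
    linear_combination ((-1 : ℤ) ^ j) * kz
  rw [Finset.sum_congr rfl hterm, Finset.sum_sub_distrib, Finset.sum_range_sub' f (N + 1)]
  have hf0 : f 0 = 0 := by simp [hf, hYtop]
  have hfN : f (N + 1) = 0 := by simp [hf, hXtop]
  rw [hf0, hfN, sub_zero, sub_zero, ← Finset.sum_mul, neg_one_geom_sum]
  constructor
  · intro hEven
    have h1 : ¬ Even (N + 1) := by simpa [Nat.even_add_one] using hEven
    simp [h1, hp]
  · intro hOdd
    have h1 : Even (N + 1) := by
      simpa [Nat.even_add_one] using (Nat.not_even_iff_odd.mpr hOdd)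
    simp [h1]
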